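/- arXiv:1611.09478 — 5 statements merged into one kernel-verified Lean document; each statement's English description precedes it below -/
import Mathlib

section
/- Let b, c, k, W₀, B₀ be real numbers with b + c > 0 and k > 0. With W(t) and B(t) the solutions of W'(t) = (k−b)W(t) + cB(t), B'(t) = bW(t) + (k−c)B(t), W(0)=W₀, B(0)=B₀, we have lim_{t→∞} W(t)/exp(k·t) = (c/(b+c))·(W₀+B₀) and lim_{t→∞} B(t)/exp(k·t) = (b/(b+c))·(W₀+B₀). -/
open Filter

lemma ode_lin (a : ℝ) (f : ℝ → ℝ) (hf : Differentiable ℝ f)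
    (h : ∀ t, deriv f t = a * f t) : ∀ t, f t = f 0 * Real.exp (a * t) := by
  have key : ∀ t, f t * Real.exp (-(a * t)) = f 0 := by
    have hd : ∀ t, HasDerivAt (fun t => f t * Real.exp (-(a * t)))
        (deriv f t * Real.exp (-(a * t)) + f t * (Real.exp (-(a * t)) * (-a))) t := by
      intro t
      have he : HasDerivAt (fun t : ℝ => Real.exp (-(a * t))) (Real.exp (-(a * t)) * (-a)) t := by
        simpa using (((hasDerivAt_id t).const_mul a).neg.exp)
      exact (hf t).hasDerivAt.mul he
    have hz : ∀ t, deriv (fun t => f t * Real.exp (-(a * t))) t = 0 := by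
      intro t
      rw [(hd t).deriv, h t]
      ring
    have hc := is_const_of_deriv_eq_zero (fun t => (hd t).differentiableAt) hz
    intro t
    simpa using hc t 0
  intro t
  have := key t
  have he : Real.exp (-(a * t)) ≠ 0 := Real.exp_ne_zero _
  field_simp [Real.exp_neg] at this ⊢
  rw [← this, mul_assoc, ← Real.exp_add, neg_add_cancel, Real.exp_zero, mul_one]

/-- Asymptotics of the first moments of the Bagchi–Pal process. -/
theorem stmt2 (b c k W0 B0 : ℝ) (hbc : 0 < b + c) (hk : 0 < k)
    (W B : ℝ → ℝ) (hWd : Differentiable ℝ W) (hBd : Differentiable ℝ B)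
    (hW' : ∀ t, deriv W t = (k - b) * W t + c * B t)
    (hB' : ∀ t, deriv B t = b * W t + (k - c) * B t)
    (hW0 : W 0 = W0) (hB0 : B 0 = B0) :
    Tendsto (fun t => W t / Real.exp (k * t)) atTop (nhds ((c / (b + c)) * (W0 + B0))) ∧
    Tendsto (fun t => B t / Real.exp (k * t)) atTop (nhds ((b / (b + c)) * (W0 + B0))) := by
  have hbc' : b + c ≠ 0 := ne_of_gt hbc
  -- S = W + B
  have hS : ∀ t, W t + B t = (W0 + B0) * Real.exp (k * t) := by
    have := ode_lin k (fun t => W t + B t) (hWd.add hBd) (by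
      intro t
      rw [deriv_fun_add (hWd t) (hBd t), hW' t, hB' t]
      ring)
    intro t
    simpa [hW0, hB0] using this t
  -- X = W - (c/(b+c)) (W+B)
  have hXd : Differentiable ℝ (fun t => W t - c / (b + c) * (W t + B t)) :=
    hWd.sub ((hWd.add hBd).const_mul _)
  have hX : ∀ t, W t - c / (b + c) * (W t + B t)
      = (W0 - c / (b + c) * (W0 + B0)) * Real.exp ((k - (b + c)) * t) := by
    have := ode_lin (k - (b + c)) (fun t => W t - c / (b + c) * (W t + B t)) hXd (by
      intro t
      rw [deriv_fun_sub (hWd t) (((hWd t).fun_add (hBd t)).const_mul _),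
        deriv_const_mul _ ((hWd t).fun_add (hBd t)), deriv_fun_add (hWd t) (hBd t), hW' t, hB' t]
      field_simp
      ring)
    intro t
    simpa [hW0, hB0] using this t
  -- Y = B - (b/(b+c)) (W+B)
  have hYd : Differentiable ℝ (fun t => B t - b / (b + c) * (W t + B t)) :=
    hBd.sub ((hWd.add hBd).const_mul _)
  have hY : ∀ t, B t - b / (b + c) * (W t + B t)
      = (B0 - b / (b + c) * (W0 + B0)) * Real.exp ((k - (b + c)) * t) := by
    have := ode_lin (k - (b + c)) (fun t => B t - b / (b + c) * (W t + B t)) hYd (by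
      intro t
      rw [deriv_fun_sub (hBd t) (((hWd t).fun_add (hBd t)).const_mul _),
        deriv_const_mul _ ((hWd t).fun_add (hBd t)), deriv_fun_add (hWd t) (hBd t), hW' t, hB' t]
      field_simp
      ring)
    intro t
    simpa [hW0, hB0] using this t
  -- exp(-(b+c)t) → 0
  have hlim : Tendsto (fun t : ℝ => Real.exp (-((b + c) * t))) atTop (nhds 0) := by
    have h1 : Tendsto (fun t : ℝ => (b + c) * t) atTop atTop :=
      Tendsto.const_mul_atTop hbc tendsto_id
    have h2 : Tendsto (fun t : ℝ => Real.exp ((b + c) * t)) atTop atTop :=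
      Real.tendsto_exp_atTop.comp h1
    simpa [Real.exp_neg, Function.comp_def] using (tendsto_inv_atTop_zero.comp h2)
  have hexp : ∀ t : ℝ, Real.exp (k * t) ≠ 0 := fun t => Real.exp_ne_zero _
  constructor
  · have heq : ∀ t, W t / Real.exp (k * t)
        = (W0 - c / (b + c) * (W0 + B0)) * Real.exp (-((b + c) * t)) + c / (b + c) * (W0 + B0) := by
      intro t
      have h1 : W t = (W0 - c / (b + c) * (W0 + B0)) * Real.exp ((k - (b + c)) * t)
          + c / (b + c) * ((W0 + B0) * Real.exp (k * t)) := by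
        have := hX t
        have h2 := hS t
        rw [h2] at this
        linarith
      rw [h1]
      rw [show (k - (b + c)) * t = k * t + (-((b + c) * t)) by ring, Real.exp_add]
      field_simp
    rw [tendsto_congr heq]
    have := (hlim.const_mul (W0 - c / (b + c) * (W0 + B0))).add
      (tendsto_const_nhds (x := c / (b + c) * (W0 + B0)))
    simpa using this
  · have heq : ∀ t, B t / Real.exp (k * t)
        = (B0 - b / (b + c) * (W0 + B0)) * Real.exp (-((b + c) * t)) + b / (b + c) * (W0 + B0) := by
      intro t
      have h1 : B t = (B0 - b / (b + c) * (W0 + B0)) * Real.exp ((k - (b + c)) * t)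
          + b / (b + c) * ((W0 + B0) * Real.exp (k * t)) := by
        have := hY t
        have h2 := hS t
        rw [h2] at this
        linarith
      rw [h1]
      rw [show (k - (b + c)) * t = k * t + (-((b + c) * t)) by ring, Real.exp_add]
      field_simp
    rw [tendsto_congr heq]
    have := (hlim.const_mul (B0 - b / (b + c) * (W0 + B0))).add
      (tendsto_const_nhds (x := b / (b + c) * (W0 + B0)))
    simpa using this
end

section
/- Fix n ≥ 1 and real numbers b, c with b ≠ 0 and nc + i(b−c) ≠ 0 for all 0 ≤ i ≤ n. Suppose a sequence K : Fin (n+1) → ℝ satisfies the recurrence (n·c + i·b − i·c)·K i = (n−i)·b·K (i+1) + i·c·K (i−1) for 1 ≤ i ≤ n−1, together with K 1 = (c/b)·K 0. Then K i = (c/b)^i · K 0 for all 0 ≤ i ≤ n. -/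
/-- The recurrence for the leading coefficients of the mixed moments of the
Bagchi–Pal process has solution `K i = (c/b)^i * K 0`. -/
theorem stmt3 (n : ℕ) (hn : 1 ≤ n) (b c : ℝ) (hb : b ≠ 0)
    (hnz : ∀ i : ℕ, i ≤ n → (n : ℝ) * c + (i : ℝ) * (b - c) ≠ 0)
    (K : ℕ → ℝ)
    (hrec : ∀ i : ℕ, 1 ≤ i → i ≤ n - 1 →
      ((n : ℝ) * c + (i : ℝ) * b - (i : ℝ) * c) * K i
        = ((n : ℝ) - (i : ℝ)) * b * K (i + 1) + (i : ℝ) * c * K (i - 1))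
    (hinit : K 1 = (c / b) * K 0) :
    ∀ i ≤ n, K i = (c / b) ^ i * K 0 := by
  intro i
  induction i using Nat.strong_induction_on with
  | _ i ih =>
    match i with
    | 0 => intro _; simp
    | 1 => intro _; simpa using hinit
    | (j+2) =>
      intro hle
      have h := hrec (j+1) (by omega) (by omega)
      simp only [Nat.add_sub_cancel] at h
      rw [ih (j+1) (by omega) (by omega), ih j (by omega) (by omega)] at h
      have hA : (n : ℝ) - ((j:ℝ)+1) ≠ 0 := by
        have : (j:ℝ) + 2 ≤ (n:ℝ) := by exact_mod_cast hle
        linarith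
      push_cast at h ⊢
      have hK : K (j+2) = (((n:ℝ) * c + ((j:ℝ)+1) * b - ((j:ℝ)+1) * c) * ((c/b)^(j+1) * K 0)
          - ((j:ℝ)+1) * c * ((c/b)^j * K 0)) / (((n:ℝ) - ((j:ℝ)+1)) * b) := by
        field_simp at h ⊢
        linarith [h]
      rw [hK, div_eq_iff (mul_ne_zero hA hb)]
      obtain ⟨q, rfl⟩ : ∃ q, c = q * b := ⟨c / b, (div_mul_cancel₀ c hb).symm⟩
      rw [mul_div_cancel_right₀ q hb]
      ring
end

section
/- Let k > 0, τ₀ > 0, and let τ(t) be a pure birth (Yule-type) process in which τ(0) = τ₀ and each unit contributes rate 1, with k units added at each event; equivalently suppose that for each n ≥ 1 the function m_n(t) = E[τ^n(t)] satisfies the ODE system m_n'(t) = ∑_{r=0}^{n−1} C(n,r) k^{n−r} m_{r+1}(t) with m_0(t) = 1 and m_n(0) = τ₀^n. Then m_n(t) = k^n ∑_{i=1}^{n} (−1)^{n−i} S(n,i) ⟨τ₀/k⟩_i e^{k i t}, where S(n,i) is the Stirling number of the second kind and ⟨x⟩_i is the rising factorial. -/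
open Finset

/-- Stirling numbers of the second kind. -/
def stirling2 : ℕ → ℕ → ℕ
  | 0, 0 => 1
  | 0, _ + 1 => 0
  | _ + 1, 0 => 0
  | n + 1, k + 1 => (k + 1) * stirling2 n (k + 1) + stirling2 n k


lemma stirling2_zero (n : ℕ) : stirling2 (n+1) 0 = 0 := rfl

lemma stirling2_succ (n i : ℕ) :
    stirling2 (n+1) (i+1) = (i+1) * stirling2 n (i+1) + stirling2 n i := rfl

lemma stirling2_of_lt : ∀ {n i : ℕ}, n < i → stirling2 n i = 0
  | 0, _+1, _ => rfl
  | n+1, i+1, h => by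
    have h2 : n < i := Nat.lt_of_succ_lt_succ h
    simp [stirling2_succ, stirling2_of_lt (Nat.lt_succ_of_lt h2), stirling2_of_lt h2]

lemma claimA : ∀ (n i : ℕ),
    ∑ t ∈ range n, (n.choose t : ℤ) * (-1)^(t+1) * stirling2 (t+1) i
      = (i : ℤ) * (-1)^n * stirling2 n i := by
  intro n
  induction n with
  | zero =>
    intro i
    rcases i with _ | j
    · simp
    · simp [stirling2_of_lt (Nat.succ_pos j)]
  | succ n IH =>
    intro i
    rw [Finset.sum_range_succ']
    have hsplit : ∀ t ∈ range n,
        (((n+1).choose (t+1) : ℤ)) * (-1)^(t+1+1) * stirling2 (t+1+1) i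
        = (n.choose t : ℤ) * (-1)^(t+1+1) * stirling2 (t+1+1) i
          + (n.choose (t+1) : ℤ) * (-1)^(t+1+1) * stirling2 (t+1+1) i := by
      intro t _
      rw [Nat.choose_succ_succ]
      push_cast
      ring
    rw [Finset.sum_congr rfl hsplit, Finset.sum_add_distrib]
    -- B part
    have hB : (∑ t ∈ range n, (n.choose (t+1) : ℤ) * (-1)^(t+1+1) * stirling2 (t+1+1) i)
        = (i : ℤ) * (-1)^n * stirling2 n i
          + (-1)^(n+1) * stirling2 (n+1) i
          - (n.choose 0 : ℤ) * (-1)^(0+1) * stirling2 (0+1) i := by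
      have h1 := Finset.sum_range_succ'
        (fun t => (n.choose t : ℤ) * (-1)^(t+1) * stirling2 (t+1) i) n
      have h2 := Finset.sum_range_succ
        (fun t => (n.choose t : ℤ) * (-1)^(t+1) * stirling2 (t+1) i) n
      rw [IH i, Nat.choose_self] at h2
      rw [h2] at h1
      push_cast at h1 ⊢
      linarith [h1]
    rw [hB]
    -- A part
    rcases i with _ | j
    · have hA : ∀ t ∈ range n,
          ((n.choose t : ℤ)) * (-1)^(t+1+1) * stirling2 (t+1+1) 0 = 0 := by
        intro t _
        simp [stirling2_zero]
      rw [Finset.sum_eq_zero hA]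
      simp [stirling2_zero]
    · have hA : ∀ t ∈ range n,
          ((n.choose t : ℤ)) * (-1)^(t+1+1) * stirling2 (t+1+1) (j+1)
          = (-(j+1)) * ((n.choose t : ℤ) * (-1)^(t+1) * stirling2 (t+1) (j+1))
            + (-1) * ((n.choose t : ℤ) * (-1)^(t+1) * stirling2 (t+1) j) := by
        intro t _
        rw [stirling2_succ]
        push_cast
        ring
      rw [Finset.sum_congr rfl hA, Finset.sum_add_distrib, ← Finset.mul_sum,
        ← Finset.mul_sum, IH (j+1), IH j, stirling2_succ]
      simp only [Nat.choose_zero_right]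
      push_cast
      ring

lemma claimB (x : ℝ) : ∀ n : ℕ,
    ∑ i ∈ range (n+1), (stirling2 n i : ℝ) * (-1)^i * ∏ j ∈ range i, (x + j)
      = (-x)^n := by
  intro n
  induction n with
  | zero => simp [stirling2]
  | succ n IH =>
    rw [Finset.sum_range_succ']
    simp only [stirling2_zero, Nat.cast_zero]
    have hsplit : ∀ i ∈ range (n+1),
        (stirling2 (n+1) (i+1) : ℝ) * (-1)^(i+1) * ∏ j ∈ range (i+1), (x + j)
        = ((i+1) : ℝ) * ((stirling2 n (i+1) : ℝ) * (-1)^(i+1) * ∏ j ∈ range (i+1), (x + j))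
          + (-(x + i)) * ((stirling2 n i : ℝ) * (-1)^i * ∏ j ∈ range i, (x + j)) := by
      intro i _
      rw [stirling2_succ, Finset.prod_range_succ]
      push_cast
      ring
    rw [Finset.sum_congr rfl hsplit, Finset.sum_add_distrib]
    have hA : ∑ i ∈ range (n+1),
        ((i+1) : ℝ) * ((stirling2 n (i+1) : ℝ) * (-1)^(i+1) * ∏ j ∈ range (i+1), (x + j))
        = ∑ i ∈ range (n+1), (i : ℝ) * ((stirling2 n i : ℝ) * (-1)^i * ∏ j ∈ range i, (x + j)) := by
      have h1 := Finset.sum_range_succ'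
        (fun i => (i : ℝ) * ((stirling2 n i : ℝ) * (-1)^i * ∏ j ∈ range i, (x + j))) (n+1)
      have h2 := Finset.sum_range_succ
        (fun i => (i : ℝ) * ((stirling2 n i : ℝ) * (-1)^i * ∏ j ∈ range i, (x + j))) (n+1)
      simp only [Nat.cast_zero, zero_mul, add_zero, stirling2_of_lt (Nat.lt_succ_self n),
        Nat.cast_zero, zero_mul, mul_zero, Nat.cast_zero] at h1 h2
      push_cast at h1 h2 ⊢
      rw [h1] at h2
      exact h2
    rw [hA]
    have hcomb : ∑ i ∈ range (n+1),
          (i : ℝ) * ((stirling2 n i : ℝ) * (-1)^i * ∏ j ∈ range i, (x + j))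
        + ∑ i ∈ range (n+1),
          (-(x + i)) * ((stirling2 n i : ℝ) * (-1)^i * ∏ j ∈ range i, (x + j))
        = (-x) * ∑ i ∈ range (n+1), (stirling2 n i : ℝ) * (-1)^i * ∏ j ∈ range i, (x + j) := by
      rw [← Finset.sum_add_distrib, Finset.mul_sum]
      refine Finset.sum_congr rfl fun i _ => by ring
    rw [hcomb, IH]
    ring

lemma neg_one_pow_sub_real (n i : ℕ) (h : i ≤ n) :
    ((-1:ℝ))^(n-i) = (-1)^n * (-1)^i := by
  have h1 : ((-1:ℝ))^(n-i) * (-1)^i = (-1)^n := by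
    rw [← pow_add, Nat.sub_add_cancel h]
  have h2 : ((-1:ℝ))^i * (-1)^i = 1 := by
    rw [← mul_pow]; norm_num
  calc ((-1:ℝ))^(n-i) = (-1)^(n-i) * ((-1)^i * (-1)^i) := by rw [h2, mul_one]
    _ = ((-1:ℝ))^(n-i) * (-1)^i * (-1)^i := by ring
    _ = (-1)^n * (-1)^i := by rw [h1]

lemma claimA_real (n i : ℕ) :
    ∑ t ∈ range n, (n.choose t : ℝ) * (-1)^(t+1) * stirling2 (t+1) i
      = (i : ℝ) * (-1)^n * stirling2 n i := by
  have h := congrArg (fun z : ℤ => (z : ℝ)) (claimA n i)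
  push_cast at h
  exact h

noncomputable def Mf (k τ0 : ℝ) (n : ℕ) (t : ℝ) : ℝ :=
  k ^ n * ∑ i ∈ Icc 1 n,
    (-1 : ℝ) ^ (n - i) * (stirling2 n i : ℝ)
      * (∏ j ∈ range i, (τ0 / k + (j : ℝ))) * Real.exp (k * (i : ℝ) * t)

lemma Mf_hasDerivAt (k τ0 : ℝ) (n : ℕ) (t : ℝ) :
    HasDerivAt (Mf k τ0 n)
      (k ^ n * ∑ i ∈ Icc 1 n,
        (-1 : ℝ) ^ (n - i) * (stirling2 n i : ℝ)
          * (∏ j ∈ range i, (τ0 / k + (j : ℝ))) * (k * (i : ℝ) * Real.exp (k * (i : ℝ) * t))) t := by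
  unfold Mf
  refine HasDerivAt.const_mul _ ?_
  refine HasDerivAt.fun_sum fun i _ => ?_
  have hexp : HasDerivAt (fun u => Real.exp (k * (i : ℝ) * u))
      (k * (i : ℝ) * Real.exp (k * (i : ℝ) * t)) t := by
    have h1 : HasDerivAt (fun u : ℝ => k * (i : ℝ) * u) (k * (i : ℝ)) t := by
      simpa using (hasDerivAt_id t).const_mul (k * (i : ℝ))
    have h2 := h1.exp
    convert h2 using 1
    ring
  simpa [mul_assoc] using hexp.const_mul
    ((-1 : ℝ) ^ (n - i) * (stirling2 n i : ℝ) * (∏ j ∈ range i, (τ0 / k + (j : ℝ))))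

lemma Mf_init (k τ0 : ℝ) (hk : k ≠ 0) (n : ℕ) (hn : 1 ≤ n) : Mf k τ0 n 0 = τ0 ^ n := by
  obtain ⟨p, rfl⟩ : ∃ p, n = p + 1 := ⟨n - 1, by omega⟩
  set x := τ0 / k with hx
  have hg : ∀ i : ℕ, i ≤ p + 1 →
      (-1 : ℝ) ^ (p + 1 - i) * (stirling2 (p+1) i : ℝ) * (∏ j ∈ range i, (x + (j : ℝ)))
      = (-1 : ℝ) ^ (p+1) * ((stirling2 (p+1) i : ℝ) * (-1)^i * ∏ j ∈ range i, (x + (j : ℝ))) := by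
    intro i hi
    rw [neg_one_pow_sub_real _ _ hi]
    ring
  have hrange : ∑ i ∈ range (p+2),
      (-1 : ℝ) ^ (p + 1 - i) * (stirling2 (p+1) i : ℝ) * (∏ j ∈ range i, (x + (j : ℝ)))
      = x ^ (p+1) := by
    rw [Finset.sum_congr rfl (fun i hi => hg i (by simp at hi; omega)), ← Finset.mul_sum,
      claimB x (p+1)]
    rw [← mul_pow]
    norm_num
  have hIcc : ∑ i ∈ Icc 1 (p+1),
      (-1 : ℝ) ^ (p + 1 - i) * (stirling2 (p+1) i : ℝ) * (∏ j ∈ range i, (x + (j : ℝ)))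
      = x ^ (p+1) := by
    rw [← hrange, Finset.sum_range_succ']
    rw [← Finset.Ico_add_one_right_eq_Icc, Finset.sum_Ico_eq_sum_range]
    simp only [show p + 1 + 1 - 1 = p + 1 from rfl, stirling2_zero, Nat.cast_zero, mul_zero, zero_mul,
      range_zero, prod_empty, mul_one, add_zero]
    refine Finset.sum_congr rfl fun i _ => by rw [add_comm 1 i]
  unfold Mf
  simp only [mul_zero, Real.exp_zero, mul_one]
  rw [hIcc, hx, div_pow, mul_div_cancel₀]
  exact pow_ne_zero _ hk

lemma claimC (n i : ℕ) (hi : 1 ≤ i) (hin : i ≤ n) :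
    ∑ r ∈ range n, (n.choose r : ℝ) * ((-1:ℝ)^(r+1-i) * (stirling2 (r+1) i : ℝ))
      = (i : ℝ) * (-1)^(n-i) * stirling2 n i := by
  have hterm : ∀ r ∈ range n,
      (n.choose r : ℝ) * ((-1:ℝ)^(r+1-i) * (stirling2 (r+1) i : ℝ))
      = (-1:ℝ)^i * ((n.choose r : ℝ) * (-1)^(r+1) * stirling2 (r+1) i) := by
    intro r _
    by_cases h : i ≤ r + 1
    · rw [neg_one_pow_sub_real _ _ h]; ring
    · rw [stirling2_of_lt (by omega : r + 1 < i)]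
      push_cast
      ring
  rw [Finset.sum_congr rfl hterm, ← Finset.mul_sum, claimA_real,
    neg_one_pow_sub_real _ _ hin]
  ring

lemma Mf_ode (k τ0 : ℝ) (n : ℕ) (hn : 1 ≤ n) (t : ℝ) :
    deriv (Mf k τ0 n) t
      = ∑ r ∈ range n, (n.choose r : ℝ) * k ^ (n - r) * Mf k τ0 (r + 1) t := by
  rw [(Mf_hasDerivAt k τ0 n t).deriv]
  have hMr : ∀ r ∈ range n, (n.choose r : ℝ) * k ^ (n - r) * Mf k τ0 (r + 1) t
      = ∑ i ∈ Icc 1 n, (n.choose r : ℝ) * k ^ (n - r) * (k ^ (r+1) *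
          ((-1:ℝ)^(r+1-i) * (stirling2 (r+1) i : ℝ) * (∏ j ∈ range i, (τ0/k + (j:ℝ)))
            * Real.exp (k * (i:ℝ) * t))) := by
    intro r hr
    simp only [mem_range] at hr
    unfold Mf
    rw [Finset.sum_subset (Finset.Icc_subset_Icc_right (by omega : r + 1 ≤ n))
      (fun i hi hni => by
        have : r + 1 < i := by
          simp only [mem_Icc] at hi hni
          omega
        rw [stirling2_of_lt this]
        push_cast
        ring)]
    rw [Finset.mul_sum, Finset.mul_sum]
  rw [Finset.sum_congr rfl hMr, Finset.sum_comm, Finset.mul_sum]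
  refine Finset.sum_congr rfl fun i hi => ?_
  simp only [mem_Icc] at hi
  have hpow : ∀ r ∈ range n, (n.choose r : ℝ) * k ^ (n - r) * (k ^ (r+1) *
          ((-1:ℝ)^(r+1-i) * (stirling2 (r+1) i : ℝ) * (∏ j ∈ range i, (τ0/k + (j:ℝ)))
            * Real.exp (k * (i:ℝ) * t)))
      = (k ^ (n+1) * (∏ j ∈ range i, (τ0/k + (j:ℝ))) * Real.exp (k * (i:ℝ) * t))
          * ((n.choose r : ℝ) * ((-1:ℝ)^(r+1-i) * (stirling2 (r+1) i : ℝ))) := by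
    intro r hr
    simp only [mem_range] at hr
    have : k ^ (n - r) * k ^ (r + 1) = k ^ (n + 1) := by
      rw [← pow_add]
      congr 1
      omega
    calc (n.choose r : ℝ) * k ^ (n - r) * (k ^ (r+1) *
          ((-1:ℝ)^(r+1-i) * (stirling2 (r+1) i : ℝ) * (∏ j ∈ range i, (τ0/k + (j:ℝ)))
            * Real.exp (k * (i:ℝ) * t)))
        = (k ^ (n - r) * k ^ (r + 1)) * ((∏ j ∈ range i, (τ0/k + (j:ℝ)))
            * Real.exp (k * (i:ℝ) * t) * ((n.choose r : ℝ) * ((-1:ℝ)^(r+1-i) * (stirling2 (r+1) i : ℝ)))) := by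
          ring
      _ = _ := by rw [this]; ring
  rw [Finset.sum_congr rfl hpow, ← Finset.mul_sum, claimC n i hi.1 hi.2, pow_succ]
  ring

theorem stmt6' (k τ0 : ℝ) (hk : 0 < k) (hτ0 : 0 < τ0)
    (m : ℕ → ℝ → ℝ)
    (h0 : ∀ t, m 0 t = 1)
    (hinit : ∀ n, 1 ≤ n → m n 0 = τ0 ^ n)
    (hdiff : ∀ n, 1 ≤ n → Differentiable ℝ (m n))
    (hode : ∀ n, 1 ≤ n → ∀ t, deriv (m n) t
      = ∑ r ∈ range n, (n.choose r : ℝ) * k ^ (n - r) * m (r + 1) t) :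
    ∀ n, 1 ≤ n → ∀ t, m n t = Mf k τ0 n t := by
  intro n
  induction n using Nat.strong_induction_on with
  | _ n IH =>
    intro hn t
    obtain ⟨p, rfl⟩ : ∃ p, n = p + 1 := ⟨n - 1, by omega⟩
    have hne : k ≠ 0 := ne_of_gt hk
    have hlow : ∀ r ∈ range p, ∀ u, m (r+1) u = Mf k τ0 (r+1) u := by
      intro r hr u
      simp only [mem_range] at hr
      exact IH (r+1) (by omega) (by omega) u
    set c : ℝ := ((p : ℝ) + 1) * k with hc
    set g : ℝ → ℝ := fun u => m (p+1) u - Mf k τ0 (p+1) u with hgdef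
    have hgd : ∀ u, HasDerivAt g (c * g u) u := by
      intro u
      have hm : HasDerivAt (m (p+1)) (deriv (m (p+1)) u) u :=
        ((hdiff (p+1) hn) u).hasDerivAt
      have hM := Mf_hasDerivAt k τ0 (p+1) u
      have hMd : HasDerivAt (Mf k τ0 (p+1)) (deriv (Mf k τ0 (p+1)) u) u := by
        rw [hM.deriv]; exact hM
      have h := hm.sub hMd
      have hval : deriv (m (p+1)) u - deriv (Mf k τ0 (p+1)) u = c * g u := by
        rw [hode (p+1) hn u, Mf_ode k τ0 (p+1) hn u,
          Finset.sum_range_succ, Finset.sum_range_succ,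
          Finset.sum_congr rfl (fun r hr => by rw [hlow r hr u])]
        simp only [Nat.add_sub_cancel, Nat.add_sub_cancel_left, pow_one,
          Nat.choose_succ_self_right]
        simp only [hgdef, hc]
        push_cast
        ring
      rw [hval] at h
      exact h
    have hg0 : g 0 = 0 := by
      rw [hgdef]
      simp only
      rw [hinit (p+1) hn, Mf_init k τ0 hne (p+1) hn, sub_self]
    set h2 : ℝ → ℝ := fun u => g u * Real.exp (-c * u) with hh2
    have hd2 : ∀ u, HasDerivAt h2 0 u := by
      intro u
      have hexp : HasDerivAt (fun u : ℝ => Real.exp (-c * u)) (Real.exp (-c * u) * (-c)) u := by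
        have h1 : HasDerivAt (fun u : ℝ => -c * u) (-c) u := by
          simpa using (hasDerivAt_id u).const_mul (-c)
        exact h1.exp
      have : HasDerivAt h2 (c * g u * Real.exp (-c * u) + g u * (Real.exp (-c * u) * -c)) u :=
        (hgd u).fun_mul hexp
      convert this using 1
      ring
    have hconst : h2 t = h2 0 :=
      is_const_of_deriv_eq_zero (fun v => (hd2 v).differentiableAt)
        (fun v => (hd2 v).deriv) t 0
    have ht2 : h2 0 = 0 := by
      rw [hh2]; simp only; rw [hg0, zero_mul]
    have hgt : g t = 0 := by
      have := hconst.trans ht2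
      rw [hh2] at this
      simp only at this
      rcases mul_eq_zero.1 this with h | h
      · exact h
      · exact absurd h (Real.exp_ne_zero _)
    have := sub_eq_zero.1 hgt
    exact this

/-- Lemma 3 of the paper: the exact moments of the total number of balls in a
tenable balanced Pólya process with balance factor `k`, where `m n t = E[τ^n(t)]`
and `∏ j ∈ range i, (τ0/k + j)` is the rising factorial `⟨τ0/k⟩_i`. -/
theorem stmt6 (k τ0 : ℝ) (hk : 0 < k) (hτ0 : 0 < τ0)
    (m : ℕ → ℝ → ℝ)
    (h0 : ∀ t, m 0 t = 1)
    (hinit : ∀ n, 1 ≤ n → m n 0 = τ0 ^ n)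
    (hdiff : ∀ n, 1 ≤ n → Differentiable ℝ (m n))
    (hode : ∀ n, 1 ≤ n → ∀ t, deriv (m n) t
      = ∑ r ∈ range n, (n.choose r : ℝ) * k ^ (n - r) * m (r + 1) t) :
    ∀ n, 1 ≤ n → ∀ t, m n t = k ^ n * ∑ i ∈ Icc 1 n,
      (-1 : ℝ) ^ (n - i) * (stirling2 n i : ℝ)
        * (∏ j ∈ range i, (τ0 / k + (j : ℝ))) * Real.exp (k * (i : ℝ) * t) := by
  exact stmt6' k τ0 hk hτ0 m h0 hinit hdiff hode
end

section
/- Fix n ≥ 1 and real numbers k, b, c. Let A_n be the (n+1)×(n+1) tridiagonal matrix with entries A[i][i] = n(k−b) − i(c−b) for 0 ≤ i ≤ n, superdiagonal entries A[i][i+1] = (n−i)·c, and subdiagonal entries A[i+1][i] = (i+1)·b for 0 ≤ i ≤ n−1. Then the characteristic polynomial of A_n is ∏_{s=0}^{n} (λ − (n·k − s·(b+c))); in particular the eigenvalues of A_n are λ_s = n·k − s·(b+c) for s = 0, 1, …, n. -/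
open Polynomial

namespace Stmt10Aux

noncomputable def al (b c : ℝ) (i s : ℕ) : ℝ := (s.choose i : ℝ) * c^i * (-b)^(s-i)

lemma al_zero (b c : ℝ) {i s : ℕ} (h : s < i) : al b c i s = 0 := by
  simp [al, Nat.choose_eq_zero_of_lt h]

lemma entry_id (n : ℕ) (k b c : ℝ) (j s : ℕ) :
    (if 1 ≤ j then ((n:ℝ) - ((j:ℝ)-1)) * c * al b c (j-1) s else 0)
      + ((n:ℝ)*(k-b) - (j:ℝ)*(c-b)) * al b c j s + ((j:ℝ)+1) * b * al b c (j+1) s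
    = ((n:ℝ)*k - (s:ℝ)*(b+c)) * al b c j s + ((n:ℝ)-(s:ℝ)) * al b c j (s+1) := by
  rcases lt_or_ge (s+1) j with h | h
  · rw [al_zero b c (show s < j - 1 by omega), al_zero b c (show s < j by omega),
      al_zero b c (show s < j + 1 by omega), al_zero b c (show s + 1 < j by omega)]
    simp
  · rcases eq_or_lt_of_le h with he | h2
    · -- j = s+1
      subst he
      have h1 : al b c s s = c^s := by simp [al]
      have h4 : al b c (s+1) (s+1) = c^(s+1) := by simp [al]
      rw [show s+1-1 = s from rfl, h1,
        al_zero b c (show s < s+1 by omega), al_zero b c (show s < s+1+1 by omega), h4,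
        if_pos (show 1 ≤ s+1 by omega)]
      push_cast
      ring
    · obtain ⟨d, rfl⟩ : ∃ d, s = j + d := ⟨s - j, by omega⟩
      rcases j with _ | m
      · rcases d with _ | e
        · have h1 : al b c 0 0 = 1 := by simp [al]
          have h3 : al b c 0 1 = -b := by simp [al]
          rw [h1, h3, al_zero b c (show 0 < 1 by omega), if_neg (by omega : ¬ 1 ≤ 0)]
          push_cast; ring
        · have h1 : al b c 0 (e+1) = (-b)^(e+1) := by simp [al]
          have h2 : al b c 1 (e+1) = ((e:ℝ)+1) * c * (-b)^e := by
            unfold al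
            rw [Nat.choose_one_right, show e+1-1 = e from rfl]
            push_cast; ring
          have h3 : al b c 0 (e+2) = (-b)^(e+2) := by simp [al]
          rw [show (0:ℕ)+(e+1) = e+1 from by omega] at *
          rw [show e+1+1 = e+2 from rfl]
          rw [h1, h2, h3, if_neg (by omega : ¬ 1 ≤ 0)]
          push_cast
          ring
      · rcases d with _ | e
        · have h1 : al b c m (m+1) = ((m:ℝ)+1) * c^m * (-b) := by
            unfold al
            rw [Nat.choose_succ_self_right, show m+1-m = 1 from by omega]
            push_cast; ring
          have h2 : al b c (m+1) (m+1) = c^(m+1) := by simp [al]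
          have h4 : al b c (m+1) (m+2) = ((m:ℝ)+2) * c^(m+1) * (-b) := by
            unfold al
            rw [Nat.choose_succ_self_right, show m+2-(m+1) = 1 from by omega]
            push_cast; ring
          rw [show m+1+0 = m+1 from by omega] at *
          rw [show m+1+1 = m+2 from rfl, show m+1-1 = m from rfl]
          rw [h1, h2, h4, al_zero b c (show m+1 < m+2 by omega), if_pos (show 1 ≤ m+1 by omega)]
          push_cast
          ring
        · have e1 : al b c m (m+e+2) = ((m+e+2).choose m : ℝ) * c^m * (-b)^(e+2) := by
            unfold al; rw [show m+e+2-m = e+2 from by omega]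
          have e2 : al b c (m+1) (m+e+2) = ((m+e+2).choose (m+1) : ℝ) * c^(m+1) * (-b)^(e+1) := by
            unfold al; rw [show m+e+2-(m+1) = e+1 from by omega]
          have e3 : al b c (m+2) (m+e+2) = ((m+e+2).choose (m+2) : ℝ) * c^(m+2) * (-b)^e := by
            unfold al; rw [show m+e+2-(m+2) = e from by omega]
          have e4 : al b c (m+1) (m+e+3) = ((m+e+3).choose (m+1) : ℝ) * c^(m+1) * (-b)^(e+2) := by
            unfold al; rw [show m+e+3-(m+1) = e+2 from by omega]
          have I1 : ((e:ℝ)+2) * ((m+e+2).choose m : ℝ) = ((m:ℝ)+1) * ((m+e+2).choose (m+1) : ℝ) := by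
            have h' := Nat.choose_succ_right_eq (m+e+2) m
            rw [show m+e+2-m = e+2 from by omega] at h'
            have h'' := congrArg (Nat.cast : ℕ → ℝ) h'
            push_cast at h''
            linear_combination -h''
          have I2 : ((m:ℝ)+2) * ((m+e+2).choose (m+2) : ℝ) = ((e:ℝ)+1) * ((m+e+2).choose (m+1) : ℝ) := by
            have h' := Nat.choose_succ_right_eq (m+e+2) (m+1)
            rw [show m+e+2-(m+1) = e+1 from by omega] at h'
            have h'' := congrArg (Nat.cast : ℕ → ℝ) h'
            push_cast at h''
            linear_combination h''
          have I3 : ((m+e+3).choose (m+1) : ℝ) = ((m+e+2).choose m : ℝ) + ((m+e+2).choose (m+1) : ℝ) := by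
            have h' := Nat.choose_succ_succ (m+e+2) m
            have h'' := congrArg (Nat.cast : ℕ → ℝ) h'
            push_cast at h''
            linear_combination h''
          rw [show m+1+(e+1) = m+e+2 from by omega] at *
          rw [show m+e+2+1 = m+e+3 from rfl, show m+1-1 = m from rfl, show m+1+1 = m+2 from rfl]
          rw [e1, e2, e3, e4, if_pos (show 1 ≤ m+1 by omega)]
          push_cast
          linear_combination (c^(m+1) * (-b)^(e+2)) * I1 + (b * c^(m+2) * (-b)^e) * I2 - (((n:ℝ)-(m:ℝ)-(e:ℝ)-2) * c^(m+1) * (-b)^(e+2)) * I3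


noncomputable def aent (n : ℕ) (k b c : ℝ) (i j : ℕ) : ℝ :=
  if i = j then (n:ℝ)*(k-b) - (i:ℝ)*(c-b)
  else if j = i+1 then ((n:ℝ)-(i:ℝ))*c
  else if i = j+1 then (i:ℝ)*b else 0

noncomputable def tent (n : ℕ) (k b c : ℝ) (m s : ℕ) : ℝ :=
  if m = s then (n:ℝ)*k - (s:ℝ)*(b+c)
  else if m = s+1 then (n:ℝ)-(s:ℝ) else 0

lemma sumL (n : ℕ) (k b c : ℝ) (j s : ℕ) (hj : j ≤ n) (hs : s ≤ n) :
    ∑ m ∈ Finset.range (n+1), al b c m s * aent n k b c m j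
    = (if 1 ≤ j then ((n:ℝ) - ((j:ℝ)-1)) * c * al b c (j-1) s else 0)
      + ((n:ℝ)*(k-b) - (j:ℝ)*(c-b)) * al b c j s + ((j:ℝ)+1) * b * al b c (j+1) s := by
  have step : ∀ m : ℕ, al b c m s * aent n k b c m j
      = (if m + 1 = j then ((n:ℝ)-(m:ℝ))*c * al b c m s else 0)
        + (if m = j then ((n:ℝ)*(k-b) - (j:ℝ)*(c-b)) * al b c m s else 0)
        + (if m = j+1 then ((m:ℝ))*b * al b c m s else 0) := by
    intro m
    unfold aent
    split_ifs <;> first | omega | (subst_vars ; push_cast ; ring)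
  simp only [step]
  rw [Finset.sum_add_distrib, Finset.sum_add_distrib]
  have S2 : ∑ m ∈ Finset.range (n+1),
      (if m = j then ((n:ℝ)*(k-b) - (j:ℝ)*(c-b)) * al b c m s else 0)
      = ((n:ℝ)*(k-b) - (j:ℝ)*(c-b)) * al b c j s := by
    rw [Finset.sum_ite_eq' (Finset.range (n+1)) j]
    rw [if_pos (Finset.mem_range.mpr (by omega))]
  have S3 : ∑ m ∈ Finset.range (n+1),
      (if m = j+1 then ((m:ℝ))*b * al b c m s else 0)
      = ((j:ℝ)+1) * b * al b c (j+1) s := by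
    rw [Finset.sum_ite_eq' (Finset.range (n+1)) (j+1)]
    rcases lt_or_ge (j+1) (n+1) with h | h
    · rw [if_pos (Finset.mem_range.mpr h)]
      push_cast; ring
    · rw [if_neg (by simp [Finset.mem_range]; omega)]
      rw [al_zero b c (show s < j+1 by omega)]
      ring
  have S1 : ∑ m ∈ Finset.range (n+1),
      (if m + 1 = j then ((n:ℝ)-(m:ℝ))*c * al b c m s else 0)
      = (if 1 ≤ j then ((n:ℝ) - ((j:ℝ)-1)) * c * al b c (j-1) s else 0) := by
    rcases j with _ | jj
    · rw [if_neg (by omega)]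
      rw [Finset.sum_eq_zero]
      intro m _
      rw [if_neg (by omega)]
    · have : ∀ m ∈ Finset.range (n+1), (if m + 1 = jj + 1 then ((n:ℝ)-(m:ℝ))*c * al b c m s else 0)
          = (if m = jj then ((n:ℝ)-(m:ℝ))*c * al b c m s else 0) := by
        intro m _
        congr 1
        simp
      rw [Finset.sum_congr rfl this, Finset.sum_ite_eq' (Finset.range (n+1)) jj,
        if_pos (Finset.mem_range.mpr (by omega)), if_pos (by omega),
        show jj + 1 - 1 = jj from rfl]
      push_cast
      ring
  rw [S1, S2, S3]

lemma sumR (n : ℕ) (k b c : ℝ) (j s : ℕ) (hs : s ≤ n) :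
    ∑ m ∈ Finset.range (n+1), tent n k b c m s * al b c j m
    = ((n:ℝ)*k - (s:ℝ)*(b+c)) * al b c j s + ((n:ℝ)-(s:ℝ)) * al b c j (s+1) := by
  have step : ∀ m : ℕ, tent n k b c m s * al b c j m
      = (if m = s then ((n:ℝ)*k - (s:ℝ)*(b+c)) * al b c j m else 0)
        + (if m = s+1 then ((n:ℝ)-(s:ℝ)) * al b c j m else 0) := by
    intro m
    unfold tent
    split_ifs <;> first | omega | (subst_vars ; push_cast ; ring)
  simp only [step]
  rw [Finset.sum_add_distrib, Finset.sum_ite_eq' (Finset.range (n+1)) s,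
    Finset.sum_ite_eq' (Finset.range (n+1)) (s+1), if_pos (Finset.mem_range.mpr (by omega))]
  rcases lt_or_ge (s+1) (n+1) with h | h
  · rw [if_pos (Finset.mem_range.mpr h)]
  · rw [if_neg (by simp [Finset.mem_range]; omega)]
    have : s = n := by omega
    subst this
    simp


lemma al_diag (b c : ℝ) (i : ℕ) : al b c i i = c^i := by simp [al]

end Stmt10Aux

open Stmt10Aux in
/-- The characteristic polynomial of the Krawtchouk-type tridiagonal moment matrix
of the Bagchi–Pal process is `∏_{s=0}^{n} (λ − (nk − s(b+c)))`. -/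
theorem stmt10 (n : ℕ) (hn : 1 ≤ n) (k b c : ℝ)
    (A : Matrix (Fin (n + 1)) (Fin (n + 1)) ℝ)
    (hA : ∀ i j : Fin (n + 1), A i j =
      if (i : ℕ) = (j : ℕ) then (n : ℝ) * (k - b) - (i : ℝ) * (c - b)
      else if (j : ℕ) = (i : ℕ) + 1 then ((n : ℝ) - (i : ℝ)) * c
      else if (i : ℕ) = (j : ℕ) + 1 then (i : ℝ) * b
      else 0) :
    A.charpoly = ∏ s ∈ Finset.range (n + 1),
      (X - C ((n : ℝ) * k - (s : ℝ) * (b + c))) := by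
  classical
  by_cases hc : c = 0
  · -- A is lower triangular
    subst hc
    have htri : A.BlockTriangular OrderDual.toDual := by
      intro i j hij
      have hv : (i : ℕ) < (j : ℕ) := hij
      rw [hA]
      split_ifs with h1 h2 h3 <;> first | omega | ring | rfl
    have hdet := Matrix.det_of_lowerTriangular _ htri.charmatrix
    rw [Matrix.charpoly, hdet]
    have hdiag : ∀ i : Fin (n+1), A.charmatrix i i
        = X - C ((n:ℝ)*(k-b) + ((i:ℕ):ℝ)*b) := by
      intro i
      rw [Matrix.charmatrix_apply_eq, hA i i, if_pos rfl]
      norm_num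
    simp only [hdiag]
    rw [Fin.prod_univ_eq_prod_range (fun i : ℕ => X - C ((n:ℝ)*(k-b) + (i:ℝ)*b)) (n+1)]
    rw [← Finset.prod_range_reflect (fun i : ℕ => X - C ((n:ℝ)*(k-b) + (i:ℝ)*b)) (n+1)]
    apply Finset.prod_congr rfl
    intro j hj
    have hj' : j ≤ n := Nat.lt_succ_iff.mp (Finset.mem_range.mp hj)
    have hcast : ((n + 1 - 1 - j : ℕ) : ℝ) = (n:ℝ) - (j:ℝ) := by
      rw [show n + 1 - 1 - j = n - j from rfl, Nat.cast_sub hj']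
    rw [hcast]
    congr 1
    ring
  · -- generic case, conjugate by the Krawtchouk matrix Q
    let Q : Matrix (Fin (n+1)) (Fin (n+1)) ℝ := Matrix.of fun s i => al b c (i:ℕ) (s:ℕ)
    let T : Matrix (Fin (n+1)) (Fin (n+1)) ℝ := Matrix.of fun s m => tent n k b c (m:ℕ) (s:ℕ)
    have hQA : Q * A = T * Q := by
      ext s j
      rw [Matrix.mul_apply, Matrix.mul_apply]
      have hL : ∑ m : Fin (n+1), Q s m * A m j
          = ∑ m ∈ Finset.range (n+1), al b c m (s:ℕ) * aent n k b c m (j:ℕ) := by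
        rw [← Fin.sum_univ_eq_sum_range (fun m : ℕ => al b c m (s:ℕ) * aent n k b c m (j:ℕ)) (n+1)]
        apply Finset.sum_congr rfl
        intro m _
        rw [hA]
        rfl
      have hR : ∑ m : Fin (n+1), T s m * Q m j
          = ∑ m ∈ Finset.range (n+1), tent n k b c m (s:ℕ) * al b c (j:ℕ) m := by
        rw [← Fin.sum_univ_eq_sum_range (fun m : ℕ => tent n k b c m (s:ℕ) * al b c (j:ℕ) m) (n+1)]
        rfl
      rw [hL, hR, sumL n k b c (j:ℕ) (s:ℕ) (by omega) (by omega),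
        sumR n k b c (j:ℕ) (s:ℕ) (by omega)]
      exact entry_id n k b c (j:ℕ) (s:ℕ)
    -- lift to polynomial matrices
    let QC := (C : ℝ →+* ℝ[X]).mapMatrix Q
    have hlift : QC * A.charmatrix = T.charmatrix * QC := by
      show QC * (Matrix.scalar (Fin (n+1)) X - (C : ℝ →+* ℝ[X]).mapMatrix A)
        = (Matrix.scalar (Fin (n+1)) X - (C : ℝ →+* ℝ[X]).mapMatrix T) * QC
      rw [mul_sub, sub_mul, ← map_mul, hQA, map_mul,
        (Matrix.scalar_commute (X : ℝ[X]) (fun r' => Commute.all X r') QC).eq]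
    have hdet := congrArg Matrix.det hlift
    rw [Matrix.det_mul, Matrix.det_mul] at hdet
    have hQdet : QC.det = C Q.det := ((RingHom.map_det (C : ℝ →+* ℝ[X]) Q)).symm
    have hQlow : Q.BlockTriangular OrderDual.toDual := by
      intro s i h
      exact al_zero b c (show (s:ℕ) < (i:ℕ) from h)
    have hQval : Q.det = ∏ i : Fin (n+1), c ^ (i:ℕ) := by
      rw [Matrix.det_of_lowerTriangular Q hQlow]
      exact Finset.prod_congr rfl fun i _ => al_diag b c (i:ℕ)
    have hQne : QC.det ≠ 0 := by
      rw [hQdet]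
      simp only [ne_eq, Polynomial.C_eq_zero]
      rw [hQval]
      exact Finset.prod_ne_zero_iff.mpr fun i _ => pow_ne_zero _ hc
    have hTup : T.BlockTriangular id := by
      intro s m h
      have h' : (m : ℕ) < (s : ℕ) := h
      show tent n k b c (m:ℕ) (s:ℕ) = 0
      unfold tent
      rw [if_neg (by omega), if_neg (by omega)]
    have key : A.charpoly = T.charpoly := by
      have h1 : A.charpoly * QC.det = T.charpoly * QC.det := by
        rw [Matrix.charpoly, Matrix.charpoly, mul_comm _ QC.det, hdet, mul_comm]
      exact mul_right_cancel₀ hQne h1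
    rw [key, Matrix.charpoly_of_upperTriangular T hTup]
    have hTdiag : ∀ i : Fin (n+1), (X : ℝ[X]) - C (T i i)
        = X - C ((n:ℝ)*k - ((i:ℕ):ℝ)*(b+c)) := by
      intro i
      show (X : ℝ[X]) - C (tent n k b c (i:ℕ) (i:ℕ)) = _
      unfold tent
      rw [if_pos rfl]
    simp only [hTdiag]
    exact Fin.prod_univ_eq_prod_range (fun i : ℕ => (X:ℝ[X]) - C ((n:ℝ)*k - (i:ℝ)*(b+c))) (n+1)
end

section
/- Let k > 0 and τ₀ > 0, and for each t ≥ 0 let X_t be a nonnegative random variable with E[X_t^n] = k^n ∑_{i=1}^{n} (−1)^{n−i} S(n,i) ⟨τ₀/k⟩_i e^{k i t} for all n ≥ 1. Then for every n ≥ 1, lim_{t→∞} E[(e^{−kt} X_t)^n] = k^n ⟨τ₀/k⟩_n, which equals the n-th moment of a Gamma(τ₀/k, k) random variable (shape τ₀/k, scale k). -/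
open Filter Finset MeasureTheory

lemma stirling2_gt (n : ℕ) : ∀ j, n < j → stirling2 n j = 0 := by
  induction n with
  | zero => intro j hj; cases j with | zero => omega | succ j => rfl
  | succ n ih =>
    intro j hj
    cases j with
    | zero => omega
    | succ j =>
      show (j + 1) * stirling2 n (j + 1) + stirling2 n j = 0
      rw [ih (j+1) (by omega), ih j (by omega)]
      ring

lemma stirling2_self' (n : ℕ) : stirling2 n n = 1 := by
  induction n with
  | zero => rfl
  | succ n ih =>
    show (n + 1) * stirling2 n (n + 1) + stirling2 n n = 1
    rw [stirling2_gt n (n+1) (by omega), ih]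
    ring

lemma gamma_add_nat (s : ℝ) (hs : 0 < s) (n : ℕ) :
    Real.Gamma (s + n) = Real.Gamma s * ∏ j ∈ range n, (s + (j : ℝ)) := by
  induction n with
  | zero => simp
  | succ n ih =>
    have h : s + (n + 1 : ℕ) = (s + n) + 1 := by push_cast; ring
    rw [h, Real.Gamma_add_one (by positivity), ih, Finset.prod_range_succ]
    ring

/-- The scaled total ball count `e^{-kt} τ(t)` has all moments converging to
those of a Gamma(τ₀/k, k) random variable (shape τ₀/k, scale k). -/
theorem stmt17 {Ω : Type*} [MeasurableSpace Ω] (μ : Measure Ω) [IsProbabilityMeasure μ]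
    (k τ0 : ℝ) (hk : 0 < k) (hτ0 : 0 < τ0)
    (X : ℝ → Ω → ℝ) (hXnn : ∀ t ω, 0 ≤ X t ω)
    (hmom : ∀ t ≥ (0:ℝ), ∀ n : ℕ, 1 ≤ n →
      ∫ ω, (X t ω) ^ n ∂μ = k ^ n * ∑ i ∈ Icc 1 n,
        (-1 : ℝ) ^ (n - i) * (stirling2 n i : ℝ)
          * (∏ j ∈ range i, (τ0 / k + (j : ℝ))) * Real.exp (k * (i : ℝ) * t)) :
    ∀ n : ℕ, 1 ≤ n →
      Tendsto (fun t => ∫ ω, (Real.exp (-k * t) * X t ω) ^ n ∂μ) atTop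
        (nhds (k ^ n * ∏ j ∈ range n, (τ0 / k + (j : ℝ)))) ∧
      k ^ n * ∏ j ∈ range n, (τ0 / k + (j : ℝ))
        = ∫ x in Set.Ioi (0 : ℝ),
            x ^ n * (x ^ (τ0 / k - 1) * Real.exp (-x / k)
              / (k ^ (τ0 / k) * Real.Gamma (τ0 / k))) := by
  intro n hn
  set s : ℝ := τ0 / k with hs
  have hs0 : 0 < s := div_pos hτ0 hk
  set c : ℕ → ℝ := fun i =>
    (-1 : ℝ) ^ (n - i) * (stirling2 n i : ℝ) * (∏ j ∈ range i, (s + (j : ℝ))) with hc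
  constructor
  · -- convergence part
    have heq : ∀ᶠ t in atTop,
        ∫ ω, (Real.exp (-k * t) * X t ω) ^ n ∂μ
          = k ^ n * ∑ i ∈ Icc 1 n, c i * Real.exp ((k * i - k * n) * t) := by
      filter_upwards [eventually_ge_atTop (0 : ℝ)] with t ht
      have h1 : ∀ ω, (Real.exp (-k * t) * X t ω) ^ n
          = Real.exp (-k * t) ^ n * (X t ω) ^ n := fun ω => mul_pow _ _ _
      simp_rw [h1]
      rw [integral_const_mul, hmom t ht n hn, ← mul_assoc,
        mul_comm (Real.exp (-k * t) ^ n) (k ^ n), mul_assoc, Finset.mul_sum]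
      congr 1
      refine Finset.sum_congr rfl fun i _ => ?_
      rw [← Real.exp_nat_mul, mul_left_comm, ← Real.exp_add]
      congr 2
      ring
    have hlim : Tendsto
        (fun t => k ^ n * ∑ i ∈ Icc 1 n, c i * Real.exp ((k * i - k * n) * t)) atTop
        (nhds (k ^ n * ∑ i ∈ Icc 1 n, c i * (if i = n then 1 else 0))) := by
      refine Tendsto.const_mul _ (tendsto_finset_sum _ fun i hi => ?_)
      by_cases hin : i = n
      · subst hin
        simp only [if_pos rfl, sub_self, zero_mul, Real.exp_zero]
        simpa using tendsto_const_nhds (α := ℝ) (x := c i * 1)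
      · simp only [if_neg hin]
        rw [show c i * 0 = c i * 0 from rfl]
        refine Tendsto.const_mul _ ?_
        have hi' : (i : ℝ) < n := by
          have := (Finset.mem_Icc.mp hi).2
          exact_mod_cast lt_of_le_of_ne this hin
        have hneg : k * i - k * n < 0 := by nlinarith
        have : Tendsto (fun t : ℝ => (k * i - k * n) * t) atTop atBot :=
          tendsto_id.const_mul_atTop_of_neg hneg
        exact Real.tendsto_exp_atBot.comp this
    have hsum : ∑ i ∈ Icc 1 n, c i * (if i = n then 1 else 0) = c n := by
      rw [Finset.sum_congr rfl (fun i _ => by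
        rw [mul_ite, mul_one, mul_zero])]
      rw [Finset.sum_ite_eq' (Icc 1 n) n c, if_pos (Finset.mem_Icc.mpr ⟨hn, le_refl n⟩)]
    have hcn : c n = ∏ j ∈ range n, (s + (j : ℝ)) := by
      simp [hc, stirling2_self' n]
    rw [hsum, hcn] at hlim
    exact hlim.congr' (by filter_upwards [heq] with t h using h.symm)
  · -- Gamma moment
    have hΓ : 0 < Real.Gamma s := Real.Gamma_pos_of_pos hs0
    have hks : (0:ℝ) < k ^ s := Real.rpow_pos_of_pos hk s
    have key : ∫ x in Set.Ioi (0:ℝ),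
        x ^ n * (x ^ (s - 1) * Real.exp (-x / k) / (k ^ s * Real.Gamma s))
        = (∫ x in Set.Ioi (0:ℝ), x ^ ((n + s) - 1) * Real.exp (-((1/k) * x)))
            / (k ^ s * Real.Gamma s) := by
      rw [← integral_div]
      refine setIntegral_congr_fun measurableSet_Ioi fun x hx => ?_
      have hx0 : 0 < x := hx
      have e1 : ((n:ℝ) + s) - 1 = (n:ℝ) + (s - 1) := by ring
      rw [← Real.rpow_natCast x n, e1, Real.rpow_add hx0,
        show -((1/k)*x) = -x/k by ring]
      ring
    have hint := Real.integral_rpow_mul_exp_neg_mul_Ioi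
      (a := (n : ℝ) + s) (r := 1 / k) (by positivity) (by positivity)
    rw [key, hint, one_div_one_div, Real.rpow_add hk, Real.rpow_natCast,
      show (n:ℝ) + s = s + n from add_comm _ _, gamma_add_nat s hs0 n]
    field_simp
end
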